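/- Let G be a group with finite symmetric generating set X and let L = Geo(G,X). If w ∼_L w² for every nonempty word w over X, then every generator x ∈ X has only finitely many conjugates in G (equivalently, the centralizer of x has finite index in G), and hence the center Z(G) has finite index in G. -/

import Mathlib

/-- `pre_{k-1}`, `suf_{k-1}` and `sub_k` agree: the equivalence `∼_k` on words. -/
def SimK {A : Type*} (k : ℕ) (u v : List A) : Prop :=
  u.take (k - 1) = v.take (k - 1) ∧
  u.drop (u.length - (k - 1)) = v.drop (v.length - (k - 1)) ∧
  ∀ s : List A, s.length = k → (s <:+: u ↔ s <:+: v)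

/-- A language `L` is `k`-locally testable if membership is invariant under `∼_k`. -/
def LocallyTestable {A : Type*} (k : ℕ) (L : Set (List A)) : Prop :=
  ∀ u v : List A, SimK k u v → (u ∈ L ↔ v ∈ L)

/-- The syntactic congruence of a language: `u ∼_L v` iff `sut ∈ L ↔ svt ∈ L` for all `s, t`. -/
def SynCong {A : Type*} (L : Set (List A)) (u v : List A) : Prop :=
  ∀ s t : List A, s ++ u ++ t ∈ L ↔ s ++ v ++ t ∈ L

/-- The element of `G` represented by a word over the generating set `X`. -/
def wordProd {G : Type*} [Group G] {X : Set G} (w : List X) : G :=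
  (w.map Subtype.val).prod

/-- A word over `X` is geodesic if no word representing the same element is shorter. -/
def IsGeodesic {G : Type*} [Group G] (X : Set G) (w : List X) : Prop :=
  ∀ v : List X, wordProd v = wordProd w → w.length ≤ v.length

/-- The language of all geodesic words over `X`. -/
def Geo {G : Type*} [Group G] (X : Set G) : Set (List X) :=
  {w | IsGeodesic X w}

/-- The `j`-th power of a word in the free monoid (concatenation of `j` copies). -/
def listPow {A : Type*} (w : List A) : ℕ → List A
  | 0 => []
  | n + 1 => w ++ listPow w n

section Aux

variable {G : Type*} [Group G] {X : Set G}

lemma wordProd_nil : wordProd ([] : List X) = 1 := rfl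

lemma wordProd_append (u v : List X) : wordProd (u ++ v) = wordProd u * wordProd v := by
  simp [wordProd]

lemma wordProd_cons (a : X) (u : List X) : wordProd (a :: u) = a.val * wordProd u := by
  simp [wordProd]

lemma listPow_length {A : Type*} (w : List A) (k : ℕ) :
    (listPow w k).length = k * w.length := by
  induction k with
  | zero => simp [listPow]
  | succ n ih => rw [listPow, List.length_append, ih]; ring

lemma wordProd_listPow (w : List X) (k : ℕ) :
    wordProd (listPow w k) = (wordProd w) ^ k := by
  induction k with
  | zero => simp [listPow, wordProd_nil]
  | succ n ih => rw [listPow, wordProd_append, ih, pow_succ']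

lemma geo_pow (hidem : ∀ w : List X, w ≠ [] → SynCong (Geo X) w (w ++ w))
    {v : List X} (hv : v ∈ Geo X) (hne : v ≠ []) :
    ∀ k, v ++ listPow v k ∈ Geo X := by
  intro k
  induction k with
  | zero => simpa [listPow] using hv
  | succ n ih =>
    have h := hidem v hne [] (listPow v n)
    simp only [List.nil_append] at h
    have h2 : (v ++ v) ++ listPow v n ∈ Geo X := h.mp ih
    simpa [listPow, List.append_assoc] using h2

lemma wordProd_invWord (hsym : ∀ x ∈ X, x⁻¹ ∈ X) (u : List X) :
    wordProd ((u.map (fun a => (⟨a.val⁻¹, hsym a.val a.2⟩ : X))).reverse) =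
      (wordProd u)⁻¹ := by
  induction u with
  | nil => simp [wordProd_nil]
  | cons b t ih =>
    rw [List.map_cons, List.reverse_cons, wordProd_append, ih, wordProd_cons]
    simp [wordProd_cons, wordProd_nil, mul_inv_rev]

lemma exists_word (hsym : ∀ x ∈ X, x⁻¹ ∈ X) (hgen : Subgroup.closure X = ⊤) (g : G) :
    ∃ w : List X, wordProd w = g := by
  have hg : g ∈ Subgroup.closure X := by rw [hgen]; trivial
  induction hg using Subgroup.closure_induction with
  | mem x hx => exact ⟨[⟨x, hx⟩], by simp [wordProd_cons, wordProd_nil]⟩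
  | one => exact ⟨[], rfl⟩
  | mul a b _ _ ha hb =>
    obtain ⟨u, hu⟩ := ha
    obtain ⟨w, hw⟩ := hb
    exact ⟨u ++ w, by rw [wordProd_append, hu, hw]⟩
  | inv a _ ha =>
    obtain ⟨u, hu⟩ := ha
    exact ⟨(u.map (fun a => (⟨a.val⁻¹, hsym a.val a.2⟩ : X))).reverse, by
      rw [wordProd_invWord hsym, hu]⟩

lemma exists_geodesic (hsym : ∀ x ∈ X, x⁻¹ ∈ X) (hgen : Subgroup.closure X = ⊤)
    (g : G) : ∃ v : List X, wordProd v = g ∧ v ∈ Geo X := by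
  classical
  obtain ⟨w, hw⟩ := exists_word hsym hgen g
  have hex : ∃ n, ∃ v : List X, v.length = n ∧ wordProd v = g :=
    ⟨w.length, w, rfl, hw⟩
  obtain ⟨v, hvl, hvp⟩ := Nat.find_spec hex
  refine ⟨v, hvp, fun v' hv' => ?_⟩
  have : Nat.find hex ≤ v'.length :=
    Nat.find_min' hex ⟨v', rfl, hv'.trans hvp⟩
  omega

lemma conj_pow_eq (g x : G) (k : ℕ) : (g * x * g⁻¹) ^ k = g * x ^ k * g⁻¹ := by
  induction k with
  | zero => simp
  | succ n ih => rw [pow_succ, ih, pow_succ]; group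

lemma conj_eq_iff (a b x : G) :
    a * x * a⁻¹ = b * x * b⁻¹ ↔ x * (a⁻¹ * b) = (a⁻¹ * b) * x := by
  constructor <;> intro h
  · calc x * (a⁻¹ * b) = a⁻¹ * (a * x * a⁻¹) * b := by group
      _ = a⁻¹ * (b * x * b⁻¹) * b := by rw [h]
      _ = (a⁻¹ * b) * x := by group
  · calc a * x * a⁻¹ = a * (x * (a⁻¹ * b)) * b⁻¹ := by group
      _ = a * ((a⁻¹ * b) * x) * b⁻¹ := by rw [h]
      _ = b * x * b⁻¹ := by group

lemma conj_mem_insert (hsym : ∀ x ∈ X, x⁻¹ ∈ X) (hgen : Subgroup.closure X = ⊤)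
    (hidem : ∀ w : List X, w ≠ [] → SynCong (Geo X) w (w ++ w))
    {x : G} (hx : x ∈ X) (g : G) : g * x * g⁻¹ ∈ insert (1 : G) X := by
  obtain ⟨u, hu⟩ := exists_word hsym hgen g
  obtain ⟨u', hu'⟩ := exists_word hsym hgen g⁻¹
  obtain ⟨v, hvp, hvgeo⟩ := exists_geodesic hsym hgen (g * x * g⁻¹)
  rcases v with _ | ⟨a, t⟩
  · left
    rw [← hvp, wordProd_nil]
  by_cases hm : t = []
  · right
    subst hm
    have h1 : wordProd [a] = a.val := by simp [wordProd_cons, wordProd_nil]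
    rw [← hvp, h1]
    exact a.2
  -- now the geodesic has length ≥ 2; derive a contradiction by pumping
  exfalso
  set vv : List X := a :: t with hvv
  have hvne : vv ≠ [] := by simp [hvv]
  have hm2 : 2 ≤ vv.length := by
    rcases t with _ | ⟨b, t'⟩
    · exact absurd rfl hm
    · simp only [hvv, List.length_cons]; omega
  set k : ℕ := u.length + u'.length + 1 with hk
  set c : List X := u ++ listPow [⟨x, hx⟩] k ++ u' with hc
  have hcprod : wordProd c = (g * x * g⁻¹) ^ k := by
    rw [hc, wordProd_append, wordProd_append, wordProd_listPow, hu, hu',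
      conj_pow_eq]
    congr 2
    simp [wordProd_cons, wordProd_nil]
  have hgeo : vv ++ listPow vv (u.length + u'.length) ∈ Geo X :=
    geo_pow hidem hvgeo hvne (u.length + u'.length)
  have hprodeq : wordProd c = wordProd (vv ++ listPow vv (u.length + u'.length)) := by
    rw [hcprod, wordProd_append, wordProd_listPow, hvp, hk, pow_succ']
  have hlen := hgeo c hprodeq
  have h1 : (vv ++ listPow vv (u.length + u'.length)).length
      = (u.length + u'.length + 1) * vv.length := by
    rw [List.length_append, listPow_length]; ring
  have h2 : c.length = u.length + k + u'.length := by
    rw [hc, List.length_append, List.length_append, listPow_length]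
    simp
  rw [h1, h2] at hlen
  have h3 : (u.length + u'.length + 1) * 2 ≤ (u.length + u'.length + 1) * vv.length :=
    Nat.mul_le_mul_left _ hm2
  omega

lemma centralizer_singleton_eq_zpowers (x : G) :
    Subgroup.centralizer {x} = Subgroup.centralizer (Subgroup.zpowers x) := by
  apply le_antisymm
  · intro h hh
    rw [Subgroup.mem_centralizer_iff] at hh ⊢
    intro y hy
    rw [SetLike.mem_coe, Subgroup.mem_zpowers_iff] at hy
    obtain ⟨m, rfl⟩ := hy
    have hc : Commute x h := hh x rfl
    exact hc.zpow_left m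
  · exact Subgroup.centralizer_le (by
      intro y hy
      rw [Set.mem_singleton_iff] at hy
      subst hy
      exact Subgroup.mem_zpowers _)

end Aux

/-- If the syntactic semigroup of `Geo(G,X)` is idempotent, then every generator
`x ∈ X` has finitely many conjugates (equivalently, its centralizer has finite index),
and hence the center of `G` has finite index. -/
theorem stmt15 {G : Type*} [Group G] (X : Set G)
    (hfin : X.Finite) (hsym : ∀ x ∈ X, x⁻¹ ∈ X) (hgen : Subgroup.closure X = ⊤)
    (hidem : ∀ w : List X, w ≠ [] → SynCong (Geo X) w (w ++ w)) :
    (∀ x ∈ X, {g : G | IsConj x g}.Finite ∧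
      (Subgroup.centralizer {x}).FiniteIndex) ∧
    (Subgroup.center G).FiniteIndex := by
  have key : ∀ x ∈ X, ∀ g : G, g * x * g⁻¹ ∈ insert (1 : G) X :=
    fun x hx g => conj_mem_insert hsym hgen hidem hx g
  have hmain : ∀ x ∈ X, {g : G | IsConj x g}.Finite ∧
      (Subgroup.centralizer {x}).FiniteIndex := by
    intro x hx
    have hconj : {g : G | IsConj x g}.Finite := by
      apply (hfin.insert (1 : G)).subset
      intro g hg
      obtain ⟨c, hc⟩ := isConj_iff.mp hg
      rw [← hc]
      exact key x hx c
    refine ⟨hconj, ?_⟩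
    haveI : Finite ↥(insert (1 : G) X) := (hfin.insert (1 : G)).to_subtype
    have hfinq : Finite (G ⧸ Subgroup.centralizer {x}) := by
      refine Finite.of_injective
        (fun q : G ⧸ Subgroup.centralizer {x} => Quotient.liftOn' q
          (fun g => (⟨g * x * g⁻¹, key x hx g⟩ : ↥(insert (1 : G) X)))
          (by
            intro a b hab
            rw [QuotientGroup.leftRel_apply] at hab
            have hcomm : x * (a⁻¹ * b) = (a⁻¹ * b) * x :=
              Subgroup.mem_centralizer_iff.mp hab x rfl
            exact Subtype.ext ((conj_eq_iff a b x).mpr hcomm))) ?_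
      intro q₁ q₂ h
      refine Quotient.inductionOn₂' q₁ q₂ (fun a b h => ?_) h
      have hab : a * x * a⁻¹ = b * x * b⁻¹ := Subtype.ext_iff.mp h
      apply Quotient.sound'
      rw [QuotientGroup.leftRel_apply, Subgroup.mem_centralizer_iff]
      intro y hy
      rw [Set.mem_singleton_iff] at hy
      rw [hy]
      exact (conj_eq_iff a b x).mp hab
    exact Subgroup.finiteIndex_of_finite_quotient
  refine ⟨hmain, ?_⟩
  haveI : Finite ↥X := hfin.to_subtype
  have hfi : ∀ g : ↥X,
      (Subgroup.centralizer ((Subgroup.zpowers (g : G)) : Set G)).FiniteIndex := by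
    intro g
    rw [← centralizer_singleton_eq_zpowers]
    exact (hmain g g.2).2
  have hfi2 := Subgroup.finiteIndex_iInf hfi
  rw [Subgroup.center_eq_infi' hgen]
  simpa only [← centralizer_singleton_eq_zpowers] using hfi2
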